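/- Let n ≥ 2 and s be a nonzero integer. If the quadruple (p, q, R, s) with R an integer satisfies both: (i) (p, q, R, s) belongs to one of the seven families in Lee's unknot classification, and (ii) (p, q, R+1, s) also belongs to one of the seven families, then s = -1 and there exists N ≥ 2 with (p, q, R, s) = (N+1, N, N, -1) and (p, q, R+1, s) = (N+1, N, N+1, -1). -/
import Mathlib


/-- Lee's seven families of parameters of unknotted twisted torus knots. -/
def LeeFamily (P Q R S : ℤ) : Prop :=
  (∃ n : ℤ, 1 ≤ n ∧ (P, Q, R, S) = (n+1, n, n+1, -1)) ∨
  (∃ n : ℤ, 2 ≤ n ∧ (P, Q, R, S) = (n+1, n, n, -1)) ∨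
  (∃ m n : ℤ, 2 ≤ m ∧ 2 ≤ n ∧
    ((P, Q, R, S) = (m*n+1, n, n, -m) ∨ (P, Q, R, S) = (m*n-1, n, n, -m))) ∨
  (∃ n : ℤ, 3 ≤ n ∧ (P, Q, R, S) = (n, 1, 2, -1)) ∨
  (∃ n : ℤ, 2 ≤ n ∧
    ((P, Q, R, S) = (4*n+1, n, 2*n, -1) ∨ (P, Q, R, S) = (4*n-1, n, 2*n, -1))) ∨
  (∃ n : ℤ, 4 ≤ n ∧ Even n ∧ (P, Q, R, S) = (n+1, n-1, n, -1)) ∨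
  (∃ n : ℕ, 4 ≤ n ∧ (P, Q, R, S) = ((Nat.fib (n+1) : ℤ), (Nat.fib (n-1) : ℤ), (Nat.fib n : ℤ), -1))

lemma lee_facts (P Q R S : ℤ) (h : LeeFamily P Q R S) :
    (S = -1 ∧ P = Q + 1 ∧ R = Q + 1 ∧ 1 ≤ Q) ∨
    (S = -1 ∧ P = Q + 1 ∧ R = Q ∧ 2 ≤ Q) ∨
    (S ≤ -2 ∧ R = Q ∧ 2 ≤ Q) ∨
    (S = -1 ∧ Q = 1 ∧ R = 2 ∧ 3 ≤ P) ∨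
    (S = -1 ∧ R = 2 * Q ∧ 2 ≤ Q ∧ (P = 4 * Q + 1 ∨ P = 4 * Q - 1)) ∨
    (S = -1 ∧ P = Q + 2 ∧ R = Q + 1 ∧ 3 ≤ Q) ∨
    (S = -1 ∧ P = R + Q ∧ 2 ≤ Q ∧ Q < R ∧ R ≤ 2 * Q) := by
  rcases h with ⟨n, hn, he⟩ | ⟨n, hn, he⟩ | ⟨m, n, hm, hn, he | he⟩ | ⟨n, hn, he⟩ |
      ⟨n, hn, he | he⟩ | ⟨n, hn, _, he⟩ | ⟨n, hn, he⟩
  all_goals simp only [Prod.mk.injEq] at he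
  · exact Or.inl (by omega)
  · exact Or.inr (Or.inl (by omega))
  · obtain ⟨hP, hQ, hR, hS⟩ := he
    clear hP
    exact Or.inr (Or.inr (Or.inl (by omega)))
  · obtain ⟨hP, hQ, hR, hS⟩ := he
    clear hP
    exact Or.inr (Or.inr (Or.inl (by omega)))
  · exact Or.inr (Or.inr (Or.inr (Or.inl (by omega))))
  · exact Or.inr (Or.inr (Or.inr (Or.inr (Or.inl (by omega)))))
  · exact Or.inr (Or.inr (Or.inr (Or.inr (Or.inl (by omega)))))
  · exact Or.inr (Or.inr (Or.inr (Or.inr (Or.inr (Or.inl (by omega))))))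
  · -- Fibonacci family
    obtain ⟨m, rfl⟩ : ∃ m : ℕ, n = m + 3 := ⟨n - 3, by omega⟩
    obtain ⟨hP, hQ, hR, hS⟩ := he
    have h1 : Nat.fib (m + 3 + 1) = Nat.fib (m + 3) + Nat.fib (m + 2) := by
      rw [show m + 3 + 1 = (m + 2) + 2 from rfl, Nat.fib_add_two]; ring
    have h2 : Nat.fib (m + 3) = Nat.fib (m + 2) + Nat.fib (m + 1) := by
      rw [show m + 3 = (m + 1) + 2 from rfl, Nat.fib_add_two]; ring
    have h3 : 2 ≤ Nat.fib (m + 2) := by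
      calc 2 = Nat.fib 3 := rfl
        _ ≤ Nat.fib (m + 2) := Nat.fib_mono (by omega)
    have h4 : Nat.fib (m + 2) < Nat.fib (m + 3) := Nat.fib_lt_fib_succ (by omega)
    have h5 : Nat.fib (m + 1) ≤ Nat.fib (m + 2) := Nat.fib_mono (by omega)
    have hQ' : Q = (Nat.fib (m + 2) : ℤ) := by
      rw [hQ]; norm_num
    refine Or.inr (Or.inr (Or.inr (Or.inr (Or.inr (Or.inr ⟨hS, ?_, ?_, ?_, ?_⟩)))))
    · rw [hP, hR, hQ']; push_cast [h1]; ring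
    · omega
    · omega
    · omega

/-- If `(p, q, R, s)` and `(p, q, R+1, s)` both belong to Lee's seven families,
then `s = -1` and `(p, q, R) = (N+1, N, N)` for some `N ≥ 2`. -/
theorem consecutive_lee_families (p q R s : ℤ) (hR : 2 ≤ R) (hs : s ≠ 0)
    (h1 : LeeFamily p q R s) (h2 : LeeFamily p q (R+1) s) :
    s = -1 ∧ ∃ N : ℤ, 2 ≤ N ∧ p = N + 1 ∧ q = N ∧ R = N := by
  have f1 := lee_facts p q R s h1
  have f2 := lee_facts p q (R + 1) s h2
  have key : s = -1 ∧ 2 ≤ q ∧ p = q + 1 ∧ R = q := by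
    rcases f1 with h | h | h | h | h | h | h <;>
      rcases f2 with h' | h' | h' | h' | h' | h' | h' <;>
      omega
  exact ⟨key.1, q, key.2.1, key.2.2.1, rfl, key.2.2.2⟩
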